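/- Let n, p, C, C̄ ≥ 1 be integers, η > 0, L > 0, γ_B ∈ (0,1), Q_B > 0, and set m = n^{nC} Q_B L; fix k ≥ C̄−1. Let f_1, …, f_n : ℝ^p → ℝ be differentiable with L-Lipschitz gradients. Let A_j (j = k−C̄+1,…,k) be row-stochastic n×n matrices, φ_j stochastic vectors in ℝ^n, R_j (j = k−C̄+1,…,k) row-stochastic n×n matrices, and v_j (j = k−C̄+1,…,k+1) stochastic vectors with v_jᵀ = v_{j+1}ᵀ R_j and [v_j]_i ≥ 1/n^{nC} for all i, j. Let x_j, y_j, s_j ∈ (ℝ^p)^n satisfy, for j = k−C̄+1,…,k: x_{j+1}^i = ∑_l [A_j]_{il} x_j^l − η y_j^i and s_{j+1}^i = ∑_l [R_j]_{il} s_j^l + (1/[v_{j+1}]_i)(∇f_i(x_{j+1}^i) − ∇f_i(x_j^i)). Define x̄_j = ∑_i [φ_j]_i x_j^i, x̃_j = (x_j^i − x̄_j)_i, and s̃_j = (s_j^i − ∑_l [v_j]_l s_j^l)_i. Assume: (a) for all b ∈ (ℝ^p)^n, ‖((I_n − 1_n v_{k+1}ᵀ)R_k⋯R_{k−C̄+1}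 ⊗ I_p) b‖ ≤ γ_B ‖((I_n − 1_n v_{k−C̄+1}ᵀ) ⊗ I_p) b‖; (b) for every j with k−C̄+2 ≤ j ≤ k+1 and all c, ‖((I_n − 1_n v_{k+1}ᵀ)R_k⋯R_j ⊗ I_p) c‖ ≤ Q_B ‖c‖ (the product being I_n when j = k+1); and (c) there are nonnegative reals ρ_j with ‖y_j‖ ≤ nL‖x̃_j‖ + nLρ_j + ‖s̃_j‖ for j = k−C̄+1,…,k. Then ‖s̃_{k+1}‖ ≤ γ_B ‖s̃_{k−C̄+1}‖ + m ∑_{l=0}^{C̄−1} [ (2√n + ηnL)‖x̃_{k−l}‖ + ηnL ρ_{k−l} + η ‖s̃_{k−l}‖ ]. -/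

import Mathlib

open Matrix

/-- The block ℓ₂ norm on `(ℝ^p)^n`: `‖x‖ = (∑_i ‖x^i‖₂²)^{1/2}`. -/
noncomputable def bnorm {n p : ℕ} (x : Fin n → EuclideanSpace ℝ (Fin p)) : ℝ :=
  Real.sqrt (∑ i, ‖x i‖ ^ 2)

/-- The blockwise action `(M ⊗ I_p)` of an `n×n` matrix on `(ℝ^p)^n`:
`((M ⊗ I_p)x)^i = ∑_j M_{ij} x^j`. -/
noncomputable def mapp {n p : ℕ} (M : Matrix (Fin n) (Fin n) ℝ)
    (x : Fin n → EuclideanSpace ℝ (Fin p)) : Fin n → EuclideanSpace ℝ (Fin p) :=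
  fun i => ∑ j, M i j • x j

/-- The matrix `I_n − 1_n φᵀ`. -/
noncomputable def proj {n : ℕ} (φ : Fin n → ℝ) : Matrix (Fin n) (Fin n) ℝ :=
  1 - Matrix.vecMulVec (fun _ => 1) φ

/-- The backward matrix product `A_hi ⋯ A_lo` (empty product, when `hi + 1 ≤ lo`, is `I`). -/
noncomputable def bprod {n : ℕ} (A : ℕ → Matrix (Fin n) (Fin n) ℝ) (lo hi : ℕ) :
    Matrix (Fin n) (Fin n) ℝ :=
  (((List.range (hi + 1 - lo)).map fun t => A (lo + t)).reverse).prod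

section aux
variable {n p : ℕ}

lemma bnorm_eq (x : Fin n → EuclideanSpace ℝ (Fin p)) :
    bnorm x = ‖(WithLp.equiv 2 (∀ _ : Fin n, EuclideanSpace ℝ (Fin p))).symm x‖ := by
  rw [bnorm, PiLp.norm_eq_of_L2]
  rfl

lemma bnorm_nonneg (x : Fin n → EuclideanSpace ℝ (Fin p)) : 0 ≤ bnorm x :=
  Real.sqrt_nonneg _

lemma bnorm_add_le (x y : Fin n → EuclideanSpace ℝ (Fin p)) :
    bnorm (x + y) ≤ bnorm x + bnorm y := by
  simp only [bnorm_eq]; exact norm_add_le _ _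

lemma bnorm_smul (c : ℝ) (x : Fin n → EuclideanSpace ℝ (Fin p)) :
    bnorm (c • x) = |c| * bnorm x := by
  simp only [bnorm_eq]
  rw [show (WithLp.equiv 2 (∀ _ : Fin n, EuclideanSpace ℝ (Fin p))).symm (c • x)
      = c • (WithLp.equiv 2 (∀ _ : Fin n, EuclideanSpace ℝ (Fin p))).symm x from rfl,
    norm_smul, Real.norm_eq_abs]

lemma bnorm_neg (x : Fin n → EuclideanSpace ℝ (Fin p)) : bnorm (-x) = bnorm x := by
  simp only [bnorm_eq]; exact norm_neg _

lemma bnorm_sub_le (x y : Fin n → EuclideanSpace ℝ (Fin p)) :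
    bnorm (x - y) ≤ bnorm x + bnorm y := by
  rw [sub_eq_add_neg]
  exact (bnorm_add_le x (-y)).trans (by rw [bnorm_neg])

lemma bnorm_sum_le {ι : Type*} (s : Finset ι) (F : ι → Fin n → EuclideanSpace ℝ (Fin p)) :
    bnorm (∑ l ∈ s, F l) ≤ ∑ l ∈ s, bnorm (F l) := by
  simp only [bnorm_eq, WithLp.equiv_symm_apply, WithLp.toLp_sum]
  exact norm_sum_le _ _

lemma block_le_bnorm (x : Fin n → EuclideanSpace ℝ (Fin p)) (i : Fin n) :
    ‖x i‖ ≤ bnorm x := by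
  rw [bnorm, ← Real.sqrt_sq (norm_nonneg (x i))]
  exact Real.sqrt_le_sqrt (Finset.single_le_sum (fun j _ => sq_nonneg ‖x j‖) (Finset.mem_univ i))

lemma bnorm_le_sqrt_mul {a : ℝ} (ha : 0 ≤ a) (x : Fin n → EuclideanSpace ℝ (Fin p))
    (h : ∀ i, ‖x i‖ ≤ a) : bnorm x ≤ Real.sqrt n * a := by
  have : bnorm x ≤ Real.sqrt (∑ _i : Fin n, a ^ 2) := by
    apply Real.sqrt_le_sqrt
    exact Finset.sum_le_sum fun i _ => pow_le_pow_left₀ (norm_nonneg _) (h i) 2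
  refine this.trans ?_
  rw [Finset.sum_const, Finset.card_univ, Fintype.card_fin, nsmul_eq_mul,
    Real.sqrt_mul (by positivity), Real.sqrt_sq ha]

lemma bnorm_le_mul_bnorm {c : ℝ} (hc : 0 ≤ c) (x y : Fin n → EuclideanSpace ℝ (Fin p))
    (h : ∀ i, ‖x i‖ ≤ c * ‖y i‖) : bnorm x ≤ c * bnorm y := by
  rw [bnorm, bnorm, ← Real.sqrt_sq hc, ← Real.sqrt_mul (sq_nonneg c), Finset.mul_sum]
  apply Real.sqrt_le_sqrt
  apply Finset.sum_le_sum
  intro i _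
  calc ‖x i‖ ^ 2 ≤ (c * ‖y i‖) ^ 2 := pow_le_pow_left₀ (norm_nonneg _) (h i) 2
    _ = c ^ 2 * ‖y i‖ ^ 2 := by ring

lemma mapp_one (x : Fin n → EuclideanSpace ℝ (Fin p)) : mapp 1 x = x := by
  funext i
  simp [mapp, Matrix.one_apply, ite_smul, Finset.sum_ite_eq]

lemma mapp_mul (M N : Matrix (Fin n) (Fin n) ℝ) (x : Fin n → EuclideanSpace ℝ (Fin p)) :
    mapp (M * N) x = mapp M (mapp N x) := by
  funext i
  simp only [mapp, Matrix.mul_apply, Finset.sum_smul, Finset.smul_sum, smul_smul]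
  exact Finset.sum_comm

lemma mapp_add (M : Matrix (Fin n) (Fin n) ℝ) (x y : Fin n → EuclideanSpace ℝ (Fin p)) :
    mapp M (x + y) = mapp M x + mapp M y := by
  funext i
  simp [mapp, smul_add, Finset.sum_add_distrib]

lemma mapp_sum {ι : Type*} (M : Matrix (Fin n) (Fin n) ℝ) (s : Finset ι)
    (F : ι → Fin n → EuclideanSpace ℝ (Fin p)) :
    mapp M (∑ l ∈ s, F l) = ∑ l ∈ s, mapp M (F l) := by
  funext i
  simp only [mapp, Finset.sum_apply, Finset.smul_sum]
  rw [Finset.sum_comm]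

lemma mapp_proj (φ : Fin n → ℝ) (x : Fin n → EuclideanSpace ℝ (Fin p)) (i : Fin n) :
    mapp (proj φ) x i = x i - ∑ j, φ j • x j := by
  simp [mapp, proj, Matrix.sub_apply, Matrix.one_apply, Matrix.vecMulVec_apply, sub_smul,
    Finset.sum_sub_distrib, ite_smul, Finset.sum_ite_eq]

lemma bnorm_mapp_stoch (A : Matrix (Fin n) (Fin n) ℝ) (hnn : ∀ i l, 0 ≤ A i l)
    (hrow : ∀ i, ∑ l, A i l = 1) (x : Fin n → EuclideanSpace ℝ (Fin p)) :
    bnorm (mapp A x) ≤ Real.sqrt n * bnorm x := by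
  apply bnorm_le_sqrt_mul (bnorm_nonneg x)
  intro i
  calc ‖mapp A x i‖ ≤ ∑ l, ‖A i l • x l‖ := norm_sum_le _ _
    _ = ∑ l, A i l * ‖x l‖ := by
        refine Finset.sum_congr rfl fun l _ => ?_
        rw [norm_smul, Real.norm_eq_abs, abs_of_nonneg (hnn i l)]
    _ ≤ ∑ l, A i l * bnorm x :=
        Finset.sum_le_sum fun l _ => mul_le_mul_of_nonneg_left (block_le_bnorm x l) (hnn i l)
    _ = bnorm x := by rw [← Finset.sum_mul, hrow, one_mul]

lemma bprod_top (A : ℕ → Matrix (Fin n) (Fin n) ℝ) (hi : ℕ) : bprod A (hi + 1) hi = 1 := by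
  simp [bprod]

lemma bprod_succ_lo (A : ℕ → Matrix (Fin n) (Fin n) ℝ) {lo hi : ℕ} (h : lo ≤ hi) :
    bprod A lo hi = bprod A (lo + 1) hi * A lo := by
  unfold bprod
  have h1 : hi + 1 - lo = (hi + 1 - (lo + 1)) + 1 := by omega
  rw [h1, List.range_succ_eq_map]
  simp only [List.map_cons, List.reverse_cons, List.prod_append, List.map_map,
    List.prod_cons, List.prod_nil, add_zero, mul_one]
  congr 2
  congr 1
  apply List.map_congr_left
  intro t _
  have h2 : lo + Nat.succ t = lo + 1 + t := by omega
  simp only [Function.comp_apply, h2]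

end aux

/-- Multi-step bound on the gradient-tracking error `s̃` (Lemma 7 of the paper). -/
theorem stmt9 (n p C Cb : ℕ) (hn : 1 ≤ n) (hp : 1 ≤ p) (hC : 1 ≤ C) (hCb : 1 ≤ Cb)
    (η L γB QB m : ℝ) (hη : 0 < η) (hL : 0 < L)
    (hγB : γB ∈ Set.Ioo (0 : ℝ) 1) (hQB : 0 < QB)
    (hm : m = (n : ℝ) ^ (n * C) * QB * L)
    (k : ℕ) (hk : Cb - 1 ≤ k)
    (f : Fin n → EuclideanSpace ℝ (Fin p) → ℝ)
    (hdiff : ∀ i, Differentiable ℝ (f i))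
    (hlip : ∀ i z w, ‖gradient (f i) z - gradient (f i) w‖ ≤ L * ‖z - w‖)
    (A : ℕ → Matrix (Fin n) (Fin n) ℝ)
    (hAnn : ∀ j, k + 1 - Cb ≤ j → j ≤ k → ∀ i l, 0 ≤ A j i l)
    (hArow : ∀ j, k + 1 - Cb ≤ j → j ≤ k → ∀ i, ∑ l, A j i l = 1)
    (φ : ℕ → Fin n → ℝ)
    (hφst : ∀ j, k + 1 - Cb ≤ j → j ≤ k → (∀ i, 0 ≤ φ j i) ∧ ∑ i, φ j i = 1)
    (R : ℕ → Matrix (Fin n) (Fin n) ℝ)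
    (hRnn : ∀ j, k + 1 - Cb ≤ j → j ≤ k → ∀ i l, 0 ≤ R j i l)
    (hRrow : ∀ j, k + 1 - Cb ≤ j → j ≤ k → ∀ i, ∑ l, R j i l = 1)
    (v : ℕ → Fin n → ℝ)
    (hvst : ∀ j, k + 1 - Cb ≤ j → j ≤ k + 1 → (∀ i, 0 ≤ v j i) ∧ ∑ i, v j i = 1)
    (hvabs : ∀ j, k + 1 - Cb ≤ j → j ≤ k → v j = Matrix.vecMul (v (j + 1)) (R j))
    (hvlb : ∀ j, k + 1 - Cb ≤ j → j ≤ k + 1 → ∀ i, 1 / (n : ℝ) ^ (n * C) ≤ v j i)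
    (x y s : ℕ → Fin n → EuclideanSpace ℝ (Fin p))
    (hxupd : ∀ j, k + 1 - Cb ≤ j → j ≤ k →
      ∀ i, x (j + 1) i = (∑ l, A j i l • x j l) - η • y j i)
    (hsupd : ∀ j, k + 1 - Cb ≤ j → j ≤ k →
      ∀ i, s (j + 1) i = (∑ l, R j i l • s j l) +
        (1 / v (j + 1) i) • (gradient (f i) (x (j + 1) i) - gradient (f i) (x j i)))
    (xbar : ℕ → EuclideanSpace ℝ (Fin p))
    (hxbar : ∀ j, xbar j = ∑ i, φ j i • x j i)
    (xtld : ℕ → Fin n → EuclideanSpace ℝ (Fin p))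
    (hxtld : ∀ j i, xtld j i = x j i - xbar j)
    (stld : ℕ → Fin n → EuclideanSpace ℝ (Fin p))
    (hstld : ∀ j i, stld j i = s j i - ∑ l, v j l • s j l)
    (ha : ∀ b : Fin n → EuclideanSpace ℝ (Fin p),
      bnorm (mapp (proj (v (k + 1)) * bprod R (k + 1 - Cb) k) b) ≤
        γB * bnorm (mapp (proj (v (k + 1 - Cb))) b))
    (hb : ∀ j, k + 2 - Cb ≤ j → j ≤ k + 1 → ∀ c : Fin n → EuclideanSpace ℝ (Fin p),
      bnorm (mapp (proj (v (k + 1)) * bprod R j k) c) ≤ QB * bnorm c)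
    (ρ : ℕ → ℝ) (hρ : ∀ j, 0 ≤ ρ j)
    (hc : ∀ j, k + 1 - Cb ≤ j → j ≤ k →
      bnorm (y j) ≤ n * L * bnorm (xtld j) + n * L * ρ j + bnorm (stld j)) :
    bnorm (stld (k + 1)) ≤
      γB * bnorm (stld (k + 1 - Cb)) +
        m * ∑ l ∈ Finset.range Cb,
          ((2 * Real.sqrt n + η * n * L) * bnorm (xtld (k - l)) +
            η * n * L * ρ (k - l) + η * bnorm (stld (k - l))) := by
  have hCk : Cb ≤ k + 1 := by omega
  have hN1 : (1:ℝ) ≤ (n : ℝ) ^ (n * C) := one_le_pow₀ (by exact_mod_cast hn)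
  have hNpos : (0:ℝ) < (n : ℝ) ^ (n * C) := by positivity
  have hsqrt1 : (1:ℝ) ≤ Real.sqrt n := by
    rw [show (1:ℝ) = Real.sqrt 1 from Real.sqrt_one.symm]
    exact Real.sqrt_le_sqrt (by exact_mod_cast hn)
  set g : ℕ → Fin n → EuclideanSpace ℝ (Fin p) :=
    fun j i => (1 / v (j + 1) i) •
      (gradient (f i) (x (j + 1) i) - gradient (f i) (x j i)) with hg
  have hsfun : ∀ j, k + 1 - Cb ≤ j → j ≤ k → s (j + 1) = mapp (R j) (s j) + g j := by
    intro j h1 h2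
    funext i
    rw [Pi.add_apply, hsupd j h1 h2 i]
    rfl
  have unroll : ∀ d, d ≤ Cb →
      s (k + 1) = mapp (bprod R (k + 1 - d) k) (s (k + 1 - d)) +
        ∑ l ∈ Finset.range d, mapp (bprod R (k + 1 - l) k) (g (k - l)) := by
    intro d
    induction d with
    | zero => intro _; simp [bprod_top, mapp_one]
    | succ d ih =>
      intro hd
      have ht1 : k + 1 - d = (k - d) + 1 := by omega
      have ht2 : k + 1 - (d + 1) = k - d := by omega
      have hlot : k + 1 - Cb ≤ k - d := by omega
      have htk : k - d ≤ k := by omega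
      rw [ih (by omega), Finset.sum_range_succ, ht2, ht1,
        hsfun (k - d) hlot htk, mapp_add, ← mapp_mul, ← bprod_succ_lo R htk]
      abel
  have hstldm : ∀ j, stld j = mapp (proj (v j)) (s j) := by
    intro j
    funext i
    rw [hstld, mapp_proj]
  have hdecomp : stld (k + 1) = mapp (proj (v (k + 1)) * bprod R (k + 1 - Cb) k)
      (s (k + 1 - Cb)) +
      ∑ l ∈ Finset.range Cb, mapp (proj (v (k + 1)) * bprod R (k + 1 - l) k) (g (k - l)) := by
    rw [hstldm, unroll Cb le_rfl, mapp_add, mapp_sum, ← mapp_mul]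
    congr 1
    exact Finset.sum_congr rfl fun l _ => (mapp_mul _ _ _).symm
  have h1 : bnorm (mapp (proj (v (k + 1)) * bprod R (k + 1 - Cb) k) (s (k + 1 - Cb))) ≤
      γB * bnorm (stld (k + 1 - Cb)) := by
    have := ha (s (k + 1 - Cb))
    rwa [← hstldm] at this
  have h2 : ∀ l ∈ Finset.range Cb,
      bnorm (mapp (proj (v (k + 1)) * bprod R (k + 1 - l) k) (g (k - l))) ≤
        m * ((2 * Real.sqrt n + η * n * L) * bnorm (xtld (k - l)) +
          η * n * L * ρ (k - l) + η * bnorm (stld (k - l))) := by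
    intro l hl
    rw [Finset.mem_range] at hl
    have hj1 : k + 1 - Cb ≤ k - l := by omega
    have hj2 : k - l ≤ k := by omega
    have hjs : k - l + 1 = k + 1 - l := by omega
    set j := k - l with hjdef
    -- Step B : bound on g j
    have hB : bnorm (g j) ≤ ((n : ℝ) ^ (n * C) * L) *
        bnorm (fun i => x (j + 1) i - x j i) := by
      apply bnorm_le_mul_bnorm (by positivity)
      intro i
      have hv : 1 / (n : ℝ) ^ (n * C) ≤ v (j + 1) i := hvlb (j + 1) (by omega) (by omega) i
      have hvpos : 0 < v (j + 1) i := lt_of_lt_of_le (by positivity) hv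
      have hvinv : 1 / v (j + 1) i ≤ (n : ℝ) ^ (n * C) := (one_div_le hvpos hNpos).mpr hv
      have : ‖g j i‖ = (1 / v (j + 1) i) *
          ‖gradient (f i) (x (j + 1) i) - gradient (f i) (x j i)‖ := by
        rw [hg]
        rw [norm_smul, Real.norm_eq_abs, abs_of_pos (by positivity)]
      rw [this]
      calc (1 / v (j + 1) i) * ‖gradient (f i) (x (j + 1) i) - gradient (f i) (x j i)‖
          ≤ (n : ℝ) ^ (n * C) * (L * ‖x (j + 1) i - x j i‖) := by
            apply mul_le_mul hvinv (hlip i _ _) (norm_nonneg _) (le_of_lt hNpos)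
        _ = ((n : ℝ) ^ (n * C) * L) * ‖x (j + 1) i - x j i‖ := by ring
    -- Step C : bound on the step difference
    have hDeq : (fun i => x (j + 1) i - x j i) =
        mapp (A j) (xtld j) - xtld j - η • y j := by
      funext i
      simp only [Pi.sub_apply, Pi.smul_apply]
      rw [hxupd j hj1 hj2 i]
      have hmap : mapp (A j) (xtld j) i = (∑ t, A j i t • x j t) - xbar j := by
        simp only [mapp, hxtld, smul_sub, Finset.sum_sub_distrib, ← Finset.sum_smul,
          hArow j hj1 hj2 i, one_smul]
      rw [hmap, hxtld]
      abel
    have hM : bnorm (mapp (A j) (xtld j)) ≤ Real.sqrt n * bnorm (xtld j) :=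
      bnorm_mapp_stoch _ (hAnn j hj1 hj2) (hArow j hj1 hj2) _
    have hy := hc j hj1 hj2
    have hD : bnorm (fun i => x (j + 1) i - x j i) ≤
        (2 * Real.sqrt n + η * n * L) * bnorm (xtld j) + η * n * L * ρ j +
          η * bnorm (stld j) := by
      rw [hDeq]
      have t1 : bnorm (mapp (A j) (xtld j) - xtld j - η • y j) ≤
          bnorm (mapp (A j) (xtld j) - xtld j) + bnorm (η • y j) := bnorm_sub_le _ _
      have t2 : bnorm (mapp (A j) (xtld j) - xtld j) ≤
          bnorm (mapp (A j) (xtld j)) + bnorm (xtld j) := bnorm_sub_le _ _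
      have t3 : bnorm (η • y j) = η * bnorm (y j) := by
        rw [bnorm_smul, abs_of_pos hη]
      have t4 : η * bnorm (y j) ≤ η * (n * L * bnorm (xtld j) + n * L * ρ j +
          bnorm (stld j)) := mul_le_mul_of_nonneg_left hy hη.le
      have t5 : bnorm (xtld j) ≤ Real.sqrt n * bnorm (xtld j) :=
        le_mul_of_one_le_left (bnorm_nonneg _) hsqrt1
      nlinarith [bnorm_nonneg (xtld j), bnorm_nonneg (stld j)]
    -- Step A + combine
    have hA2 := hb (k + 1 - l) (by omega) (by omega) (g (k - l))
    calc bnorm (mapp (proj (v (k + 1)) * bprod R (k + 1 - l) k) (g (k - l)))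
        ≤ QB * bnorm (g j) := hA2
      _ ≤ QB * (((n : ℝ) ^ (n * C) * L) * bnorm (fun i => x (j + 1) i - x j i)) :=
          mul_le_mul_of_nonneg_left hB hQB.le
      _ ≤ QB * (((n : ℝ) ^ (n * C) * L) *
          ((2 * Real.sqrt n + η * n * L) * bnorm (xtld j) + η * n * L * ρ j +
            η * bnorm (stld j))) := by
          apply mul_le_mul_of_nonneg_left _ hQB.le
          exact mul_le_mul_of_nonneg_left hD (by positivity)
      _ = m * ((2 * Real.sqrt n + η * n * L) * bnorm (xtld (k - l)) +
          η * n * L * ρ (k - l) + η * bnorm (stld (k - l))) := by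
          rw [hm]; ring
  calc bnorm (stld (k + 1))
      = bnorm (mapp (proj (v (k + 1)) * bprod R (k + 1 - Cb) k) (s (k + 1 - Cb)) +
          ∑ l ∈ Finset.range Cb,
            mapp (proj (v (k + 1)) * bprod R (k + 1 - l) k) (g (k - l))) := by
        rw [hdecomp]
    _ ≤ bnorm (mapp (proj (v (k + 1)) * bprod R (k + 1 - Cb) k) (s (k + 1 - Cb))) +
          bnorm (∑ l ∈ Finset.range Cb,
            mapp (proj (v (k + 1)) * bprod R (k + 1 - l) k) (g (k - l))) :=
        bnorm_add_le _ _
    _ ≤ γB * bnorm (stld (k + 1 - Cb)) +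
          ∑ l ∈ Finset.range Cb,
            bnorm (mapp (proj (v (k + 1)) * bprod R (k + 1 - l) k) (g (k - l))) :=
        add_le_add h1 (bnorm_sum_le _ _)
    _ ≤ γB * bnorm (stld (k + 1 - Cb)) +
          ∑ l ∈ Finset.range Cb,
            m * ((2 * Real.sqrt n + η * n * L) * bnorm (xtld (k - l)) +
              η * n * L * ρ (k - l) + η * bnorm (stld (k - l))) :=
        add_le_add_right (Finset.sum_le_sum h2) _
    _ = γB * bnorm (stld (k + 1 - Cb)) +
          m * ∑ l ∈ Finset.range Cb,
            ((2 * Real.sqrt n + η * n * L) * bnorm (xtld (k - l)) +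
              η * n * L * ρ (k - l) + η * bnorm (stld (k - l))) := by
        rw [Finset.mul_sum]
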